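/- Let γ : ℝ → ℝ² be a smooth closed unit-speed curve with period ℓ, let f : ℝ → ℝ be smooth and ℓ-periodic, and let x : (−ε,ε) → ℝ² and τ : (−ε,ε) → (0,∞) be differentiable with x(0) = x₀, τ(0) = t₀, x′(0) = y, τ′(0) = h. For s ∈ (−ε,ε) define γ_s(t) = γ(t) + s·f(t)·n(t) and Φ(s) = (4πτ(s))^{−1/2} ∫₀^ℓ e^{−|γ_s(t) − x(s)|²/(4τ(s))} |γ_s′(t)| dt. Then Φ is differentiable at s = 0 and Φ′(0) = (4πt₀)^{−1/2} ∫₀^ℓ [ f(t)·( H(t) − ⟨γ(t) − x₀, n(t)⟩/(2t₀) ) + h·( |γ(t) − x₀|²/(4t₀²) − 1/(2t₀) ) + ⟨γ(t) − x₀, y⟩/(2t₀) ] e^{−|γ(t) − x₀|²/(4t₀)} dt. -/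

import Mathlib

noncomputable section
open Real MeasureTheory
open scoped RealInnerProductSpace

abbrev E2 := EuclideanSpace ℝ (Fin 2)

/-- The unit normal of a unit-speed plane curve: `γ′` rotated by `−π/2`. -/
def normal (γ : ℝ → E2) (t : ℝ) : E2 := WithLp.toLp 2 ![deriv γ t 1, -(deriv γ t 0)]

/-- The curvature `H = −⟨γ″, n⟩` of a unit-speed plane curve. -/
def curv (γ : ℝ → E2) (t : ℝ) : ℝ := -⟪deriv (deriv γ) t, normal γ t⟫

lemma inner_E2 (a b : E2) : ⟪a, b⟫ = a 0 * b 0 + a 1 * b 1 := by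
  simp [PiLp.inner_apply, Fin.sum_univ_two, RCLike.inner_apply, mul_comm]

lemma vec_eq_smul (a b : ℝ) :
    (WithLp.toLp 2 ![a, b] : E2) = a • (EuclideanSpace.single (0 : Fin 2) (1:ℝ))
      + b • (EuclideanSpace.single (1 : Fin 2) (1:ℝ)) := by
  ext i
  fin_cases i <;> simp [EuclideanSpace.single_apply]

lemma normal_hasDerivAt (γ : ℝ → E2) (hγ : ContDiff ℝ (⊤ : ℕ∞) γ) (t : ℝ) :
    HasDerivAt (normal γ) (WithLp.toLp 2 ![deriv (deriv γ) t 1, -(deriv (deriv γ) t 0)] : E2) t := by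
  have hd : ContDiff ℝ (⊤ : ℕ∞) (deriv γ) := hγ.iterate_deriv 1
  have h1 : HasDerivAt (deriv γ) (deriv (deriv γ) t) t :=
    ((hd.differentiable (by simp)) t).hasDerivAt
  have hc : ∀ i : Fin 2, HasDerivAt (fun s => deriv γ s i) (deriv (deriv γ) t i) t := by
    intro i
    have := (EuclideanSpace.proj (𝕜 := ℝ) i).hasFDerivAt.comp_hasDerivAt t h1
    simpa [Function.comp_def] using this
  have : HasDerivAt (fun s => (deriv γ s 1) • (EuclideanSpace.single (0 : Fin 2) (1:ℝ))
      + (-(deriv γ s 0)) • (EuclideanSpace.single (1 : Fin 2) (1:ℝ)))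
      ((deriv (deriv γ) t 1) • (EuclideanSpace.single (0 : Fin 2) (1:ℝ))
      + (-(deriv (deriv γ) t 0)) • (EuclideanSpace.single (1 : Fin 2) (1:ℝ))) t :=
    ((hc 1).smul_const _).add (((hc 0).neg).smul_const _)
  rw [show normal γ = fun s => (deriv γ s 1) • (EuclideanSpace.single (0 : Fin 2) (1:ℝ))
      + (-(deriv γ s 0)) • (EuclideanSpace.single (1 : Fin 2) (1:ℝ)) from
    funext fun s => vec_eq_smul _ _, vec_eq_smul]
  exact this

lemma normal_contDiff (γ : ℝ → E2) (hγ : ContDiff ℝ (⊤ : ℕ∞) γ) :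
    ContDiff ℝ (⊤ : ℕ∞) (normal γ) := by
  have hd : ContDiff ℝ (⊤ : ℕ∞) (deriv γ) := hγ.iterate_deriv 1
  rw [show normal γ = fun s => (deriv γ s 1) • (EuclideanSpace.single (0 : Fin 2) (1:ℝ))
      + (-(deriv γ s 0)) • (EuclideanSpace.single (1 : Fin 2) (1:ℝ)) from
    funext fun s => vec_eq_smul _ _]
  have hci : ∀ i : Fin 2, ContDiff ℝ (⊤ : ℕ∞) (fun s => deriv γ s i) := fun i =>
    (EuclideanSpace.proj (𝕜 := ℝ) i).contDiff.comp hd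
  exact (((hci 1).smul contDiff_const)).add (((hci 0).neg).smul contDiff_const)

lemma inner_v_normal (γ : ℝ → E2) (t : ℝ) : ⟪deriv γ t, normal γ t⟫ = 0 := by
  rw [inner_E2]; simp [normal]; ring

lemma inner_v_dnormal (γ : ℝ → E2) (hγ : ContDiff ℝ (⊤ : ℕ∞) γ) (t : ℝ) :
    ⟪deriv γ t, deriv (normal γ) t⟫ = curv γ t := by
  rw [(normal_hasDerivAt γ hγ t).deriv, inner_E2]
  rw [curv, inner_E2]
  simp [normal]; ring

/-- projections -/
def fstP : (ℝ × E2 × ℝ) →L[ℝ] ℝ := ContinuousLinearMap.fst ℝ ℝ (E2 × ℝ)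
def aproj : (ℝ × E2 × ℝ) →L[ℝ] E2 :=
  (ContinuousLinearMap.fst ℝ E2 ℝ).comp (ContinuousLinearMap.snd ℝ ℝ (E2 × ℝ))
def rproj : (ℝ × E2 × ℝ) →L[ℝ] ℝ :=
  (ContinuousLinearMap.snd ℝ E2 ℝ).comp (ContinuousLinearMap.snd ℝ ℝ (E2 × ℝ))

def Qfun (γ w dw : ℝ → E2) (p : ℝ × E2 × ℝ) (t : ℝ) : ℝ :=
  Real.exp (-‖γ t + p.1 • w t - p.2.1‖ ^ 2 / (4 * p.2.2)) * ‖deriv γ t + p.1 • dw t‖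

def Gmap (γ w dw : ℝ → E2) (p : ℝ × E2 × ℝ) (t : ℝ) : (ℝ × E2 × ℝ) →L[ℝ] ℝ :=
  (Real.exp (-‖γ t + p.1 • w t - p.2.1‖ ^ 2 / (4 * p.2.2)) *
      (⟪deriv γ t + p.1 • dw t, dw t⟫ / ‖deriv γ t + p.1 • dw t‖)) • fstP
  + (‖deriv γ t + p.1 • dw t‖ * Real.exp (-‖γ t + p.1 • w t - p.2.1‖ ^ 2 / (4 * p.2.2)) *
      (2 / (4 * p.2.2))) •
      ((innerSL ℝ (γ t + p.1 • w t - p.2.1)).comp (aproj - fstP.smulRight (w t)))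
  + (‖deriv γ t + p.1 • dw t‖ * Real.exp (-‖γ t + p.1 • w t - p.2.1‖ ^ 2 / (4 * p.2.2)) *
      (‖γ t + p.1 • w t - p.2.1‖ ^ 2 * 4 / (4 * p.2.2) ^ 2)) • rproj

set_option maxHeartbeats 1000000 in
lemma Qfun_hasFDerivAt (γ w dw : ℝ → E2) (t : ℝ) (p : ℝ × E2 × ℝ)
    (hr : 0 < p.2.2) (hz : deriv γ t + p.1 • dw t ≠ 0) :
    HasFDerivAt (fun q => Qfun γ w dw q t) (Gmap γ w dw p t) p := by
  have hr4 : (4 : ℝ) * p.2.2 ≠ 0 := by positivity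
  have hzn : ‖deriv γ t + p.1 • dw t‖ ≠ 0 := norm_ne_zero_iff.mpr hz
  -- derivative of u q = γ t + q.1 • w t - q.2.1
  have hu : HasFDerivAt (fun q : ℝ × E2 × ℝ => γ t + q.1 • w t - q.2.1)
      (fstP.smulRight (w t) - aproj) p := by
    have h0 : HasFDerivAt (fun q : ℝ × E2 × ℝ => q.1 • w t) (fstP.smulRight (w t)) p :=
      (fstP.smulRight (w t)).hasFDerivAt
    exact (h0.const_add (γ t)).sub aproj.hasFDerivAt
  have hsq : HasFDerivAt (fun q : ℝ × E2 × ℝ => ‖γ t + q.1 • w t - q.2.1‖ ^ 2)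
      (2 • (innerSL ℝ (γ t + p.1 • w t - p.2.1)).comp (fstP.smulRight (w t) - aproj)) p :=
    hu.norm_sq
  have hinv : HasDerivAt (fun r : ℝ => (4 * r)⁻¹) (-(4 / (4 * p.2.2) ^ 2)) p.2.2 := by
    have := ((hasDerivAt_id p.2.2).const_mul (4:ℝ)).inv hr4
    exact this.congr_deriv (by simp only [id, mul_one, neg_div])
  have hrp : HasFDerivAt (fun q : ℝ × E2 × ℝ => (4 * q.2.2)⁻¹)
      ((-(4 / (4 * p.2.2) ^ 2)) • rproj) p := by
    have := hinv.comp_hasFDerivAt p rproj.hasFDerivAt; exact this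
  have hexparg := (hsq.neg.mul hrp).exp
  have hz2 : HasFDerivAt (fun q : ℝ × E2 × ℝ => ‖deriv γ t + q.1 • dw t‖ ^ 2)
      (2 • (innerSL ℝ (deriv γ t + p.1 • dw t)).comp (fstP.smulRight (dw t))) p := by
    have h0 : HasFDerivAt (fun q : ℝ × E2 × ℝ => deriv γ t + q.1 • dw t)
        (fstP.smulRight (dw t)) p :=
      ((fstP.smulRight (dw t)).hasFDerivAt).const_add (deriv γ t)
    exact h0.norm_sq
  have hq0 : (‖deriv γ t + p.1 • dw t‖ ^ 2 : ℝ) ≠ 0 := pow_ne_zero _ hzn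
  have hsqrt : HasDerivAt Real.sqrt
      (1 / (2 * Real.sqrt (‖deriv γ t + p.1 • dw t‖ ^ 2))) (‖deriv γ t + p.1 • dw t‖ ^ 2) :=
    Real.hasDerivAt_sqrt hq0
  have hnorm : HasFDerivAt (fun q : ℝ × E2 × ℝ => ‖deriv γ t + q.1 • dw t‖)
      ((1 / (2 * Real.sqrt (‖deriv γ t + p.1 • dw t‖ ^ 2))) •
        (2 • (innerSL ℝ (deriv γ t + p.1 • dw t)).comp (fstP.smulRight (dw t)))) p := by
    have := hsqrt.comp_hasFDerivAt p hz2
    simp only [Function.comp_def] at this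
    have heq : (fun q : ℝ × E2 × ℝ => Real.sqrt (‖deriv γ t + q.1 • dw t‖ ^ 2))
        = fun q : ℝ × E2 × ℝ => ‖deriv γ t + q.1 • dw t‖ := by
      funext q; exact Real.sqrt_sq (norm_nonneg _)
    rwa [heq] at this
  have hQ := hexparg.mul hnorm
  have hfeq : (fun q : ℝ × E2 × ℝ => Qfun γ w dw q t)
      = fun q : ℝ × E2 × ℝ =>
        Real.exp (-‖γ t + q.1 • w t - q.2.1‖ ^ 2 * (4 * q.2.2)⁻¹) *
          ‖deriv γ t + q.1 • dw t‖ := by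
    funext q; rw [Qfun, div_eq_mul_inv]
  rw [hfeq]
  refine hQ.congr_fderiv ?_
  refine ContinuousLinearMap.ext fun q => ?_
  simp only [Gmap, ContinuousLinearMap.add_apply, ContinuousLinearMap.smul_apply,
    ContinuousLinearMap.coe_comp', Function.comp_apply, ContinuousLinearMap.coe_sub',
    Pi.sub_apply, ContinuousLinearMap.smulRight_apply, innerSL_apply_apply, smul_eq_mul,
    ContinuousLinearMap.coe_smul', Pi.smul_apply, nsmul_eq_mul, Nat.cast_ofNat,
    inner_sub_right, inner_smul_right, Real.sqrt_sq (norm_nonneg _), fstP, aproj, rproj,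
    ContinuousLinearMap.coe_fst', ContinuousLinearMap.coe_snd', div_eq_mul_inv]
  simp only [Pi.mul_apply, Pi.neg_apply, ContinuousLinearMap.neg_apply, _root_.smul_apply,
    ContinuousLinearMap.coe_comp', Function.comp_apply, ContinuousLinearMap.sub_apply,
    ContinuousLinearMap.smulRight_apply, ContinuousLinearMap.coe_fst', ContinuousLinearMap.coe_snd',
    innerSL_apply_apply, inner_sub_right, inner_smul_right, nsmul_eq_mul, Nat.cast_ofNat, smul_eq_mul]
  field_simp
  ring

lemma norm_fstP_le : ‖fstP‖ ≤ 1 := ContinuousLinearMap.norm_fst_le ..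
lemma norm_aproj_le : ‖aproj‖ ≤ 1 := by
  refine le_trans (ContinuousLinearMap.opNorm_comp_le _ _) ?_
  calc ‖ContinuousLinearMap.fst ℝ E2 ℝ‖ * ‖ContinuousLinearMap.snd ℝ ℝ (E2 × ℝ)‖
      ≤ 1 * 1 := by
        gcongr <;> [exact ContinuousLinearMap.norm_fst_le ..; exact ContinuousLinearMap.norm_snd_le ..]
    _ = 1 := by norm_num
lemma norm_rproj_le : ‖rproj‖ ≤ 1 := by
  refine le_trans (ContinuousLinearMap.opNorm_comp_le _ _) ?_
  calc ‖ContinuousLinearMap.snd ℝ E2 ℝ‖ * ‖ContinuousLinearMap.snd ℝ ℝ (E2 × ℝ)‖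
      ≤ 1 * 1 := by
        gcongr <;> exact ContinuousLinearMap.norm_snd_le ..
    _ = 1 := by norm_num

set_option maxHeartbeats 1000000 in
set_option synthInstance.maxHeartbeats 400000 in
lemma Gmap_norm_le (γ w dw : ℝ → E2) (t : ℝ) (p : ℝ × E2 × ℝ) (t₀ K : ℝ)
    (ht₀ : 0 < t₀) (hK1 : 1 ≤ K)
    (hwt : ‖w t‖ ≤ K) (hdwt : ‖dw t‖ ≤ K)
    (hr2 : t₀ / 2 ≤ p.2.2)
    (hz2 : 1 / 2 ≤ ‖deriv γ t + p.1 • dw t‖)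
    (hz3 : ‖deriv γ t + p.1 • dw t‖ ≤ 2)
    (hu3 : ‖γ t + p.1 • w t - p.2.1‖ ≤ 3 * K) :
    ‖Gmap γ w dw p t‖ ≤ K + 6 * K * (K + 1) / t₀ + 18 * K ^ 2 / t₀ ^ 2 := by
  have hK0 : (0:ℝ) < K := lt_of_lt_of_le one_pos hK1
  have hzn : (0:ℝ) < ‖deriv γ t + p.1 • dw t‖ := lt_of_lt_of_le one_half_pos hz2
  have hrpos : (0:ℝ) < p.2.2 := lt_of_lt_of_le (by linarith) hr2
  have he1 : Real.exp (-‖γ t + p.1 • w t - p.2.1‖ ^ 2 / (4 * p.2.2)) ≤ 1 := by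
    rw [Real.exp_le_one_iff]
    apply div_nonpos_of_nonpos_of_nonneg
    · rw [neg_nonpos]; positivity
    · linarith
  have he0 : (0:ℝ) ≤ Real.exp (-‖γ t + p.1 • w t - p.2.1‖ ^ 2 / (4 * p.2.2)) :=
    (Real.exp_pos _).le
  have hu0 : (0:ℝ) ≤ ‖γ t + p.1 • w t - p.2.1‖ := norm_nonneg _
  -- first coefficient bound
  have hc1 : |Real.exp (-‖γ t + p.1 • w t - p.2.1‖ ^ 2 / (4 * p.2.2)) *
      (⟪deriv γ t + p.1 • dw t, dw t⟫ / ‖deriv γ t + p.1 • dw t‖)| ≤ K := by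
    rw [abs_mul, abs_div]
    have hinner : |⟪deriv γ t + p.1 • dw t, dw t⟫| ≤ ‖deriv γ t + p.1 • dw t‖ * ‖dw t‖ :=
      abs_real_inner_le_norm _ _
    have : |⟪deriv γ t + p.1 • dw t, dw t⟫| / |‖deriv γ t + p.1 • dw t‖| ≤ ‖dw t‖ := by
      rw [abs_of_nonneg hzn.le, div_le_iff₀ hzn]
      calc |⟪deriv γ t + p.1 • dw t, dw t⟫| ≤ ‖deriv γ t + p.1 • dw t‖ * ‖dw t‖ := hinner
        _ = ‖dw t‖ * ‖deriv γ t + p.1 • dw t‖ := by ring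
    calc |Real.exp _| * (|⟪deriv γ t + p.1 • dw t, dw t⟫| / |‖deriv γ t + p.1 • dw t‖|)
        ≤ 1 * ‖dw t‖ := by
          apply mul_le_mul _ this (by positivity) zero_le_one
          rwa [abs_of_nonneg he0]
      _ ≤ K := by linarith
  -- second coefficient bound
  have hc2 : |‖deriv γ t + p.1 • dw t‖ * Real.exp (-‖γ t + p.1 • w t - p.2.1‖ ^ 2 / (4 * p.2.2)) *
      (2 / (4 * p.2.2))| ≤ 2 / t₀ := by
    rw [abs_of_nonneg (by positivity)]
    have h24 : 2 / (4 * p.2.2) ≤ 1 / t₀ := by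
      rw [div_le_div_iff₀ (by linarith) ht₀]; linarith
    calc ‖deriv γ t + p.1 • dw t‖ * Real.exp _ * (2 / (4 * p.2.2))
        ≤ 2 * 1 * (1 / t₀) := by
          apply mul_le_mul (mul_le_mul hz3 he1 he0 (by norm_num)) h24 (by positivity) (by norm_num)
      _ = 2 / t₀ := by ring
  -- third coefficient bound
  have hc3 : |‖deriv γ t + p.1 • dw t‖ * Real.exp (-‖γ t + p.1 • w t - p.2.1‖ ^ 2 / (4 * p.2.2)) *
      (‖γ t + p.1 • w t - p.2.1‖ ^ 2 * 4 / (4 * p.2.2) ^ 2)| ≤ 18 * K ^ 2 / t₀ ^ 2 := by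
    rw [abs_of_nonneg (by positivity)]
    have hnum : ‖γ t + p.1 • w t - p.2.1‖ ^ 2 * 4 ≤ 9 * K ^ 2 * 4 := by nlinarith
    have hden : (2 * t₀) ^ 2 ≤ (4 * p.2.2) ^ 2 := by nlinarith
    have h3 : ‖γ t + p.1 • w t - p.2.1‖ ^ 2 * 4 / (4 * p.2.2) ^ 2 ≤ 9 * K ^ 2 / t₀ ^ 2 := by
      calc ‖γ t + p.1 • w t - p.2.1‖ ^ 2 * 4 / (4 * p.2.2) ^ 2
          ≤ 9 * K ^ 2 * 4 / (2 * t₀) ^ 2 :=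
            div_le_div₀ (by positivity) hnum (by positivity) hden
        _ = 9 * K ^ 2 / t₀ ^ 2 := by ring
    calc ‖deriv γ t + p.1 • dw t‖ * Real.exp _ * (‖γ t + p.1 • w t - p.2.1‖ ^ 2 * 4 / (4 * p.2.2) ^ 2)
        ≤ 2 * 1 * (9 * K ^ 2 / t₀ ^ 2) := by
          apply mul_le_mul (mul_le_mul hz3 he1 he0 (by norm_num)) h3 (by positivity) (by norm_num)
      _ = 18 * K ^ 2 / t₀ ^ 2 := by ring
  -- opnorm of the inner comp
  have hcomp : ‖(innerSL ℝ (γ t + p.1 • w t - p.2.1)).comp (aproj - fstP.smulRight (w t))‖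
      ≤ 3 * K * (K + 1) := by
    refine le_trans (ContinuousLinearMap.opNorm_comp_le _ _) ?_
    have h1 : ‖innerSL ℝ (γ t + p.1 • w t - p.2.1)‖ ≤ 3 * K := by
      rw [innerSL_apply_norm]; exact hu3
    have h2 : ‖aproj - fstP.smulRight (w t)‖ ≤ K + 1 := by
      refine le_trans (norm_sub_le _ _) ?_
      have := ContinuousLinearMap.norm_smulRight_apply fstP (w t)
      have h3 : ‖fstP.smulRight (w t)‖ ≤ K := by
        rw [this]
        calc ‖fstP‖ * ‖w t‖ ≤ 1 * K :=
          mul_le_mul norm_fstP_le hwt (norm_nonneg _) zero_le_one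
        _ = K := one_mul K
      linarith [norm_aproj_le]
    calc ‖innerSL ℝ (γ t + p.1 • w t - p.2.1)‖ * ‖aproj - fstP.smulRight (w t)‖
        ≤ (3 * K) * (K + 1) := mul_le_mul h1 h2 (norm_nonneg _) (by positivity)
      _ = 3 * K * (K + 1) := by ring
  calc ‖Gmap γ w dw p t‖
      ≤ ‖(Real.exp (-‖γ t + p.1 • w t - p.2.1‖ ^ 2 / (4 * p.2.2)) *
          (⟪deriv γ t + p.1 • dw t, dw t⟫ / ‖deriv γ t + p.1 • dw t‖)) • fstP‖
        + ‖(‖deriv γ t + p.1 • dw t‖ * Real.exp (-‖γ t + p.1 • w t - p.2.1‖ ^ 2 / (4 * p.2.2)) *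
          (2 / (4 * p.2.2))) •
          ((innerSL ℝ (γ t + p.1 • w t - p.2.1)).comp (aproj - fstP.smulRight (w t)))‖
        + ‖(‖deriv γ t + p.1 • dw t‖ * Real.exp (-‖γ t + p.1 • w t - p.2.1‖ ^ 2 / (4 * p.2.2)) *
          (‖γ t + p.1 • w t - p.2.1‖ ^ 2 * 4 / (4 * p.2.2) ^ 2)) • rproj‖ := norm_add₃_le
    _ ≤ K * 1 + (2 / t₀) * (3 * K * (K + 1)) + (18 * K ^ 2 / t₀ ^ 2) * 1 := by
        have b1 : ‖(Real.exp (-‖γ t + p.1 • w t - p.2.1‖ ^ 2 / (4 * p.2.2)) *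
            (⟪deriv γ t + p.1 • dw t, dw t⟫ / ‖deriv γ t + p.1 • dw t‖)) • fstP‖ ≤ K * 1 := by
          rw [norm_smul _ fstP, Real.norm_eq_abs]
          exact mul_le_mul hc1 norm_fstP_le (norm_nonneg _) hK0.le
        have b2 : ‖(‖deriv γ t + p.1 • dw t‖ *
            Real.exp (-‖γ t + p.1 • w t - p.2.1‖ ^ 2 / (4 * p.2.2)) * (2 / (4 * p.2.2))) •
            ((innerSL ℝ (γ t + p.1 • w t - p.2.1)).comp (aproj - fstP.smulRight (w t)))‖
            ≤ (2 / t₀) * (3 * K * (K + 1)) := by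
          rw [norm_smul _ ((innerSL ℝ (γ t + p.1 • w t - p.2.1)).comp
            (aproj - fstP.smulRight (w t))), Real.norm_eq_abs]
          exact mul_le_mul hc2 hcomp (norm_nonneg _) (by positivity)
        have b3 : ‖(‖deriv γ t + p.1 • dw t‖ *
            Real.exp (-‖γ t + p.1 • w t - p.2.1‖ ^ 2 / (4 * p.2.2)) *
            (‖γ t + p.1 • w t - p.2.1‖ ^ 2 * 4 / (4 * p.2.2) ^ 2)) • rproj‖
            ≤ (18 * K ^ 2 / t₀ ^ 2) * 1 := by
          rw [norm_smul _ rproj, Real.norm_eq_abs]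
          exact mul_le_mul hc3 norm_rproj_le (norm_nonneg _) (by positivity)
        exact add_le_add (add_le_add b1 b2) b3
    _ = K + 6 * K * (K + 1) / t₀ + 18 * K ^ 2 / t₀ ^ 2 := by ring


lemma Qfun_continuous (γ w dw : ℝ → E2) (hγc : Continuous γ) (hvc : Continuous (deriv γ))
    (hwc : Continuous w) (hdc : Continuous dw) (p : ℝ × E2 × ℝ) :
    Continuous (fun t => Qfun γ w dw p t) := by
  unfold Qfun
  exact (Real.continuous_exp.comp
    ((((hγc.add (hwc.const_smul p.1)).sub continuous_const).norm.pow 2).neg.div_const _)).mul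
    (hvc.add (hdc.const_smul p.1)).norm

lemma Gmap_continuous (γ w dw : ℝ → E2) (hγc : Continuous γ) (hvc : Continuous (deriv γ))
    (hwc : Continuous w) (hdc : Continuous dw) (p : ℝ × E2 × ℝ)
    (hz : ∀ t, deriv γ t + p.1 • dw t ≠ 0) :
    Continuous (fun t => Gmap γ w dw p t) := by
  have hU : Continuous (fun t => γ t + p.1 • w t - p.2.1) :=
    (hγc.add (hwc.const_smul p.1)).sub continuous_const
  have hZ : Continuous (fun t => deriv γ t + p.1 • dw t) := hvc.add (hdc.const_smul p.1)
  have hE : Continuous (fun t => Real.exp (-‖γ t + p.1 • w t - p.2.1‖ ^ 2 / (4 * p.2.2))) :=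
    Real.continuous_exp.comp ((hU.norm.pow 2).neg.div_const _)
  unfold Gmap
  refine ((Continuous.fun_smul ?_ continuous_const).fun_add (Continuous.fun_smul ?_ ?_)).fun_add
    (Continuous.fun_smul ?_ continuous_const)
  · exact hE.mul ((hZ.inner hdc).div hZ.norm (fun t => norm_ne_zero_iff.mpr (hz t)))
  · exact (hZ.norm.mul hE).mul continuous_const
  · exact (((innerSL ℝ (E := E2)).continuous.comp hU).clm_comp
      (continuous_const.sub
        (((ContinuousLinearMap.smulRightL ℝ (ℝ × E2 × ℝ) E2 fstP).continuous).comp hwc)))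
  · exact (hZ.norm.mul hE).mul (((hU.norm.pow 2).mul continuous_const).div_const _)

set_option maxHeartbeats 2000000 in
set_option synthInstance.maxHeartbeats 400000 in
/-- First variation formula for the Gaussian weighted length functional
`F_{x₀,t₀}` under simultaneous variation of a smooth closed unit-speed curve, the center,
and the scale. -/
theorem stmt1 (γ : ℝ → E2) (hγ : ContDiff ℝ (⊤ : ℕ∞) γ)
    (hunit : ∀ t, ‖deriv γ t‖ = 1)
    (ℓ : ℝ) (hℓ : 0 < ℓ) (hper : ∀ t, γ (t + ℓ) = γ t)
    (f : ℝ → ℝ) (hf : ContDiff ℝ (⊤ : ℕ∞) f) (hfper : ∀ t, f (t + ℓ) = f t)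
    (ε : ℝ) (hε : 0 < ε)
    (x : ℝ → E2) (τ : ℝ → ℝ)
    (x₀ : E2) (t₀ : ℝ) (ht₀ : 0 < t₀) (y : E2) (h : ℝ)
    (hx0 : x 0 = x₀) (hτ0 : τ 0 = t₀)
    (hτpos : ∀ s ∈ Set.Ioo (-ε) ε, 0 < τ s)
    (hx : HasDerivAt x y 0) (hτ : HasDerivAt τ h 0) :
    HasDerivAt
      (fun s : ℝ => (4 * π * τ s) ^ (-(1:ℝ)/2) *
        ∫ t in (0:ℝ)..ℓ,
          Real.exp (-‖(γ t + (s * f t) • normal γ t) - x s‖ ^ 2 / (4 * τ s)) *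
            ‖deriv (fun t' => γ t' + (s * f t') • normal γ t') t‖)
      ((4 * π * t₀) ^ (-(1:ℝ)/2) *
        ∫ t in (0:ℝ)..ℓ,
          (f t * (curv γ t - ⟪γ t - x₀, normal γ t⟫ / (2 * t₀))
            + h * (‖γ t - x₀‖ ^ 2 / (4 * t₀ ^ 2) - 1 / (2 * t₀))
            + ⟪γ t - x₀, y⟫ / (2 * t₀)) * Real.exp (-‖γ t - x₀‖ ^ 2 / (4 * t₀)))
      0 := by
  -- basic smoothness facts
  have hγd : Differentiable ℝ γ := hγ.differentiable (by simp)
  have hvC : ContDiff ℝ (⊤ : ℕ∞) (deriv γ) := hγ.iterate_deriv 1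
  set w : ℝ → E2 := fun t => f t • normal γ t with hw
  have hwC : ContDiff ℝ (⊤ : ℕ∞) w := hf.smul (normal_contDiff γ hγ)
  set dw : ℝ → E2 := deriv w with hdw
  have hwd : ∀ t, HasDerivAt w (dw t) t := fun t =>
    ((hwC.differentiable (by simp)) t).hasDerivAt
  have hdwC : Continuous dw := hwC.continuous_deriv (by exact_mod_cast le_top)
  have hfd : ∀ t, HasDerivAt f (deriv f t) t := fun t =>
    ((hf.differentiable (by simp)) t).hasDerivAt
  have hnd : ∀ t, HasDerivAt (normal γ) (deriv (normal γ) t) t := fun t =>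
    (((normal_contDiff γ hγ).differentiable (by simp)) t).hasDerivAt
  have hkey2 : ∀ t, ⟪deriv γ t, dw t⟫ = f t * curv γ t := by
    intro t
    have h1 : HasDerivAt w (f t • deriv (normal γ) t + deriv f t • normal γ t) t :=
      (hfd t).smul (hnd t)
    rw [hdw, h1.deriv, inner_add_right, real_inner_smul_right, real_inner_smul_right,
      inner_v_normal, inner_v_dnormal γ hγ]
    ring
  have hvne : ∀ t, deriv γ t ≠ 0 := fun t h0 => by
    have := hunit t; rw [h0, norm_zero] at this; norm_num at this
  -- bounds on the compact interval
  obtain ⟨K1, hK1b⟩ := (isCompact_Icc (a := (0:ℝ)) (b := ℓ)).exists_bound_of_continuousOn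
    hwC.continuous.continuousOn
  obtain ⟨K2, hK2b⟩ := (isCompact_Icc (a := (0:ℝ)) (b := ℓ)).exists_bound_of_continuousOn
    hdwC.continuousOn
  obtain ⟨K3, hK3b⟩ := (isCompact_Icc (a := (0:ℝ)) (b := ℓ)).exists_bound_of_continuousOn
    ((Continuous.sub hγ.continuous continuous_const : Continuous fun t : ℝ => γ t - x₀).continuousOn)
  set K : ℝ := max 1 (max K1 (max K2 K3)) with hK
  have hK1 : (1:ℝ) ≤ K := le_max_left _ _
  have hK0 : (0:ℝ) < K := lt_of_lt_of_le one_pos hK1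
  have hKw : ∀ t ∈ Set.Icc (0:ℝ) ℓ, ‖w t‖ ≤ K := fun t ht =>
    le_trans (hK1b t ht) (le_trans (le_max_left _ _) (le_max_right _ _))
  have hKdw : ∀ t ∈ Set.Icc (0:ℝ) ℓ, ‖dw t‖ ≤ K := fun t ht =>
    le_trans (hK2b t ht) (le_trans (le_trans (le_max_left _ _) (le_max_right _ _)) (le_max_right _ _))
  have hKu : ∀ t ∈ Set.Icc (0:ℝ) ℓ, ‖γ t - x₀‖ ≤ K := fun t ht =>
    le_trans (hK3b t ht) (le_trans (le_trans (le_max_right _ _) (le_max_right _ _)) (le_max_right _ _))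
  -- radius
  set δ : ℝ := min (min 1 (t₀ / 2)) (1 / (2 * (K + 1))) with hδ
  have hδpos : 0 < δ := by
    exact lt_min (lt_min one_pos (by linarith)) (by positivity)
  have hδ1 : δ ≤ 1 := le_trans (min_le_left _ _) (min_le_left _ _)
  have hδt : δ ≤ t₀ / 2 := le_trans (min_le_left _ _) (min_le_right _ _)
  have hδK : δ * (K + 1) ≤ 1 / 2 := by
    have h1 : δ ≤ 1 / (2 * (K + 1)) := min_le_right _ _
    calc δ * (K + 1) ≤ 1 / (2 * (K + 1)) * (K + 1) := by nlinarith
      _ = 1 / 2 := by field_simp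
  -- facts about points in the ball
  have hball : ∀ p ∈ Metric.ball ((0:ℝ), x₀, t₀) δ,
      |p.1| < δ ∧ ‖p.2.1 - x₀‖ < δ ∧ |p.2.2 - t₀| < δ := by
    intro p hp
    rw [Metric.mem_ball, Prod.dist_eq, Prod.dist_eq] at hp
    rcases max_lt_iff.mp hp with ⟨h1, h2⟩
    rcases max_lt_iff.mp h2 with ⟨h3, h4⟩
    refine ⟨?_, ?_, ?_⟩
    · simpa [Real.dist_eq] using h1
    · simpa [dist_eq_norm] using h3
    · simpa [Real.dist_eq] using h4
  have hballr : ∀ p ∈ Metric.ball ((0:ℝ), x₀, t₀) δ, t₀ / 2 ≤ p.2.2 := by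
    intro p hp
    have := (hball p hp).2.2
    have := abs_lt.mp this
    linarith [hδt]
  have hballz : ∀ p ∈ Metric.ball ((0:ℝ), x₀, t₀) δ, ∀ t ∈ Set.Icc (0:ℝ) ℓ,
      1 / 2 ≤ ‖deriv γ t + p.1 • dw t‖ := by
    intro p hp t ht
    have h1 : ‖p.1 • dw t‖ ≤ 1 / 2 := by
      rw [norm_smul, Real.norm_eq_abs]
      calc |p.1| * ‖dw t‖ ≤ δ * K :=
        mul_le_mul (hball p hp).1.le (hKdw t ht) (norm_nonneg _) hδpos.le
        _ ≤ δ * (K + 1) := by nlinarith [hδpos.le]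
        _ ≤ 1 / 2 := hδK
    have h2 := norm_sub_norm_le (deriv γ t) (-(p.1 • dw t))
    rw [sub_neg_eq_add, norm_neg, hunit t] at h2
    linarith
  have hballz2 : ∀ p ∈ Metric.ball ((0:ℝ), x₀, t₀) δ, ∀ t ∈ Set.Icc (0:ℝ) ℓ,
      ‖deriv γ t + p.1 • dw t‖ ≤ 2 := by
    intro p hp t ht
    have h1 : ‖p.1 • dw t‖ ≤ 1 / 2 := by
      rw [norm_smul, Real.norm_eq_abs]
      calc |p.1| * ‖dw t‖ ≤ δ * K :=
        mul_le_mul (hball p hp).1.le (hKdw t ht) (norm_nonneg _) hδpos.le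
        _ ≤ δ * (K + 1) := by nlinarith [hδpos.le]
        _ ≤ 1 / 2 := hδK
    calc ‖deriv γ t + p.1 • dw t‖ ≤ ‖deriv γ t‖ + ‖p.1 • dw t‖ := norm_add_le _ _
      _ ≤ 1 + 1 / 2 := by rw [hunit t]; linarith
      _ ≤ 2 := by norm_num
  have hballu : ∀ p ∈ Metric.ball ((0:ℝ), x₀, t₀) δ, ∀ t ∈ Set.Icc (0:ℝ) ℓ,
      ‖γ t + p.1 • w t - p.2.1‖ ≤ 3 * K := by
    intro p hp t ht
    have heq : γ t + p.1 • w t - p.2.1 = ((γ t - x₀) + p.1 • w t) - (p.2.1 - x₀) := by abel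
    rw [heq]
    have h1 : ‖p.1 • w t‖ ≤ 1 / 2 := by
      rw [norm_smul, Real.norm_eq_abs]
      calc |p.1| * ‖w t‖ ≤ δ * K :=
        mul_le_mul (hball p hp).1.le (hKw t ht) (norm_nonneg _) hδpos.le
        _ ≤ δ * (K + 1) := by nlinarith [hδpos.le]
        _ ≤ 1 / 2 := hδK
    calc ‖((γ t - x₀) + p.1 • w t) - (p.2.1 - x₀)‖
        ≤ ‖(γ t - x₀) + p.1 • w t‖ + ‖p.2.1 - x₀‖ := norm_sub_le _ _
      _ ≤ (‖γ t - x₀‖ + ‖p.1 • w t‖) + δ := by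
          gcongr
          · exact norm_add_le _ _
          · exact (hball p hp).2.1.le
      _ ≤ (K + 1 / 2) + 1 := by
          have := hKu t ht
          gcongr
      _ ≤ 3 * K := by linarith
  have hballzne : ∀ p ∈ Metric.ball ((0:ℝ), x₀, t₀) δ, ∀ t ∈ Set.Icc (0:ℝ) ℓ,
      deriv γ t + p.1 • dw t ≠ 0 := by
    intro p hp t ht h0
    have := hballz p hp t ht
    rw [h0, norm_zero] at this
    linarith
  -- the dominated differentiation theorem
  have hp₀mem : ((0:ℝ), x₀, t₀) ∈ Metric.ball ((0:ℝ), x₀, t₀) δ := Metric.mem_ball_self hδpos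
  have hGcont : Continuous (fun t => Gmap γ w dw ((0:ℝ), x₀, t₀) t) := by
    apply Gmap_continuous γ w dw hγ.continuous hvC.continuous hwC.continuous hdwC
    intro t
    simp only [zero_smul, add_zero]
    exact hvne t
  have hQcont : ∀ p : ℝ × E2 × ℝ, Continuous (fun t => Qfun γ w dw p t) := fun p =>
    Qfun_continuous γ w dw hγ.continuous hvC.continuous hwC.continuous hdwC p
  have main : HasFDerivAt (fun p => ∫ t in (0:ℝ)..ℓ, Qfun γ w dw p t)
      (∫ t in (0:ℝ)..ℓ, Gmap γ w dw ((0:ℝ), x₀, t₀) t) ((0:ℝ), x₀, t₀) := by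
    apply intervalIntegral.hasFDerivAt_integral_of_dominated_of_fderiv_le
      (F' := fun p t => Gmap γ w dw p t)
      (bound := fun _ => K + 6 * K * (K + 1) / t₀ + 18 * K ^ 2 / t₀ ^ 2) (Metric.ball_mem_nhds _ hδpos)
    · exact Filter.Eventually.of_forall fun p => (hQcont p).aestronglyMeasurable
    · exact (hQcont _).intervalIntegrable _ _
    · exact hGcont.aestronglyMeasurable
    · refine ae_of_all _ fun t ht p hp => ?_
      rw [Set.uIoc_of_le hℓ.le] at ht
      have ht' : t ∈ Set.Icc (0:ℝ) ℓ := Set.Ioc_subset_Icc_self ht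
      exact Gmap_norm_le γ w dw t p t₀ K ht₀ hK1 (hKw t ht') (hKdw t ht')
        (hballr p hp) (hballz p hp t ht') (hballz2 p hp t ht') (hballu p hp t ht')
    · exact intervalIntegrable_const
    · refine ae_of_all _ fun t ht p hp => ?_
      rw [Set.uIoc_of_le hℓ.le] at ht
      have ht' : t ∈ Set.Icc (0:ℝ) ℓ := Set.Ioc_subset_Icc_self ht
      exact Qfun_hasFDerivAt γ w dw t p (lt_of_lt_of_le (by linarith) (hballr p hp))
        (hballzne p hp t ht')
  -- prefactor
  have hin : HasDerivAt (fun r : ℝ => 4 * π * r) (4 * π) t₀ := by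
    simpa using (hasDerivAt_id t₀).const_mul (4 * π)
  have h4πt₀ : (0:ℝ) < 4 * π * t₀ := by positivity
  have hout : HasDerivAt (fun z : ℝ => z ^ (-(1:ℝ)/2))
      ((-(1:ℝ)/2) * (4 * π * t₀) ^ ((-(1:ℝ)/2) - 1)) (4 * π * t₀) :=
    Real.hasDerivAt_rpow_const (Or.inl h4πt₀.ne')
  have h1 : HasDerivAt (fun r : ℝ => (4 * π * r) ^ (-(1:ℝ)/2))
      ((-(1:ℝ)/2) * (4 * π * t₀) ^ ((-(1:ℝ)/2) - 1) * (4 * π)) t₀ := by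
    have := hout.comp t₀ hin
    simpa [Function.comp_def] using this
  have hpre : HasFDerivAt (fun p : ℝ × E2 × ℝ => (4 * π * p.2.2) ^ (-(1:ℝ)/2))
      (((-(1:ℝ)/2) * (4 * π * t₀) ^ ((-(1:ℝ)/2) - 1) * (4 * π)) • rproj) ((0:ℝ), x₀, t₀) :=
    by have := h1.comp_hasFDerivAt ((0:ℝ), x₀, t₀) rproj.hasFDerivAt; exact this
  have hΨ := hpre.mul main
  -- composition with the path
  have hσ : HasDerivAt (fun s : ℝ => ((s, x s, τ s) : ℝ × E2 × ℝ)) ((1:ℝ), y, h) 0 :=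
    (hasDerivAt_id (0:ℝ)).prodMk (hx.prodMk hτ)
  have hΨ' : HasFDerivAt (fun p : ℝ × E2 × ℝ => (4 * π * p.2.2) ^ (-(1:ℝ)/2) *
      ∫ t in (0:ℝ)..ℓ, Qfun γ w dw p t)
      (((4 * π * ((0:ℝ), x₀, t₀).2.2) ^ (-(1:ℝ)/2) •
          ∫ t in (0:ℝ)..ℓ, Gmap γ w dw ((0:ℝ), x₀, t₀) t) +
        (∫ t in (0:ℝ)..ℓ, Qfun γ w dw ((0:ℝ), x₀, t₀) t) •
          ((-(1:ℝ)/2) * (4 * π * t₀) ^ ((-(1:ℝ)/2) - 1) * (4 * π)) • rproj)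
      ((0:ℝ), x 0, τ 0) := by
    rw [hx0, hτ0]; exact hΨ
  have hΦ := hΨ'.comp_hasDerivAt 0 hσ
  -- rewrite the target function
  have hder : ∀ (s t : ℝ), deriv (fun t' => γ t' + (s * f t') • normal γ t') t
      = deriv γ t + s • dw t := by
    intro s t
    have h1 : (fun t' => γ t' + (s * f t') • normal γ t') = fun t' => γ t' + s • w t' := by
      funext r; rw [mul_smul]
    rw [h1]
    exact (((hγd t).hasDerivAt).add ((hwd t).const_smul s)).deriv
  have hfeq : (fun s : ℝ => (4 * π * τ s) ^ (-(1:ℝ)/2) *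
        ∫ t in (0:ℝ)..ℓ, Real.exp (-‖(γ t + (s * f t) • normal γ t) - x s‖ ^ 2 / (4 * τ s)) *
          ‖deriv (fun t' => γ t' + (s * f t') • normal γ t') t‖)
      = fun s : ℝ => (4 * π * ((s, x s, τ s) : ℝ × E2 × ℝ).2.2) ^ (-(1:ℝ)/2) *
          ∫ t in (0:ℝ)..ℓ, Qfun γ w dw (s, x s, τ s) t := by
    funext s
    congr 1
    refine intervalIntegral.integral_congr fun t _ => ?_
    rw [Qfun]
    rw [hder s t, mul_smul]
  rw [hfeq]
  -- pointwise values at the base point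
  have hGapp : ∀ t, (Gmap γ w dw ((0:ℝ), x₀, t₀) t) (((1:ℝ), y, h) : ℝ × E2 × ℝ)
      = (f t * curv γ t - f t * ⟪γ t - x₀, normal γ t⟫ / (2 * t₀) + ⟪γ t - x₀, y⟫ / (2 * t₀)
          + h * (‖γ t - x₀‖ ^ 2 / (4 * t₀ ^ 2))) * Real.exp (-‖γ t - x₀‖ ^ 2 / (4 * t₀)) := by
    intro t
    have hwnt : ⟪γ t - x₀, w t⟫ = f t * ⟪γ t - x₀, normal γ t⟫ := real_inner_smul_right _ _ _
    simp only [Gmap, zero_smul, add_zero, ContinuousLinearMap.add_apply,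
      ContinuousLinearMap.smul_apply, smul_eq_mul, ContinuousLinearMap.coe_comp',
      Function.comp_apply, ContinuousLinearMap.coe_sub', Pi.sub_apply,
      ContinuousLinearMap.smulRight_apply, innerSL_apply_apply, fstP, aproj, rproj,
      ContinuousLinearMap.coe_fst', ContinuousLinearMap.coe_snd', one_smul]
    rw [hunit t, hkey2 t, inner_sub_right, hwnt]
    field_simp
    ring
  have hQ0 : ∀ t, Qfun γ w dw ((0:ℝ), x₀, t₀) t = Real.exp (-‖γ t - x₀‖ ^ 2 / (4 * t₀)) := by
    intro t
    rw [Qfun]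
    simp only [zero_smul, add_zero, hunit t, mul_one]
  -- integrability
  have hEcont : Continuous (fun t => Real.exp (-‖γ t - x₀‖ ^ 2 / (4 * t₀))) :=
    Real.continuous_exp.comp ((((hγ.continuous.sub continuous_const).norm.pow 2).neg).div_const _)
  have hGAcont : Continuous (fun t => (Gmap γ w dw ((0:ℝ), x₀, t₀) t) (((1:ℝ), y, h) : ℝ × E2 × ℝ)) :=
    (ContinuousLinearMap.apply ℝ ℝ (((1:ℝ), y, h) : ℝ × E2 × ℝ)).continuous.comp hGcont
  have hGint : IntervalIntegrable (fun t => Gmap γ w dw ((0:ℝ), x₀, t₀) t) volume 0 ℓ :=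
    hGcont.intervalIntegrable _ _
  have happ : (∫ t in (0:ℝ)..ℓ, Gmap γ w dw ((0:ℝ), x₀, t₀) t) (((1:ℝ), y, h) : ℝ × E2 × ℝ)
      = ∫ t in (0:ℝ)..ℓ, (Gmap γ w dw ((0:ℝ), x₀, t₀) t) (((1:ℝ), y, h) : ℝ × E2 × ℝ) := by
    rw [intervalIntegral.integral_of_le hℓ.le, intervalIntegral.integral_of_le hℓ.le]
    exact ContinuousLinearMap.integral_apply
      ((intervalIntegrable_iff_integrableOn_Ioc_of_le hℓ.le).mp hGint) _
  have hIQ : (∫ t in (0:ℝ)..ℓ, Qfun γ w dw ((0:ℝ), x₀, t₀) t)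
      = ∫ t in (0:ℝ)..ℓ, Real.exp (-‖γ t - x₀‖ ^ 2 / (4 * t₀)) :=
    intervalIntegral.integral_congr fun t _ => hQ0 t
  have hc₀ : (-(1:ℝ)/2) * (4 * π * t₀) ^ ((-(1:ℝ)/2) - 1) * (4 * π)
      = (4 * π * t₀) ^ (-(1:ℝ)/2) * (-(1 / (2 * t₀))) := by
    rw [Real.rpow_sub h4πt₀, Real.rpow_one]
    field_simp
  have hsplit : (∫ t in (0:ℝ)..ℓ,
        (f t * (curv γ t - ⟪γ t - x₀, normal γ t⟫ / (2 * t₀))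
          + h * (‖γ t - x₀‖ ^ 2 / (4 * t₀ ^ 2) - 1 / (2 * t₀))
          + ⟪γ t - x₀, y⟫ / (2 * t₀)) * Real.exp (-‖γ t - x₀‖ ^ 2 / (4 * t₀)))
      = (∫ t in (0:ℝ)..ℓ, (Gmap γ w dw ((0:ℝ), x₀, t₀) t) (((1:ℝ), y, h) : ℝ × E2 × ℝ))
        - (h / (2 * t₀)) * ∫ t in (0:ℝ)..ℓ, Real.exp (-‖γ t - x₀‖ ^ 2 / (4 * t₀)) := by
    rw [← intervalIntegral.integral_const_mul,
      ← intervalIntegral.integral_sub (hGAcont.intervalIntegrable _ _)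
        ((continuous_const.fun_mul hEcont).intervalIntegrable _ _)]
    refine intervalIntegral.integral_congr fun t _ => ?_
    rw [hGapp t]
    have ht₀' : t₀ ≠ 0 := ht₀.ne'
    field_simp
    ring
  -- final assembly
  refine hΦ.congr_deriv ?_
  simp only [Function.comp_def, ContinuousLinearMap.add_apply, ContinuousLinearMap.smul_apply,
    smul_eq_mul, rproj, ContinuousLinearMap.coe_comp', Function.comp_apply,
    ContinuousLinearMap.coe_snd']
  rw [happ, hIQ, hsplit, hc₀]
  ring
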